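/- arXiv:1810.11505 — 8 statements merged into one kernel-verified Lean document; each statement's English description precedes it below -/
import Mathlib

section
/- Let B ⊆ ℝⁿ be a nonempty open convex set and let f : ℝⁿ → ℝᵐ be differentiable on B such that ξ̲_{ij} ≤ ∂f_i/∂x_j(x) ≤ ξ̄_{ij} for all x ∈ B, i ∈ {1,…,m}, j ∈ {1,…,n}. Then for every pair x, y ∈ B there exists q ∈ ℝ^{m×n} such that f_i(x) − f_i(y) = Σ_{j=1}^n q_{ij} for every i ∈ {1,…,m}, and for every choice of nonnegative multipliers λ_{ij} ≥ 0 the inequality Σ_{i=1}^m Σ_{j=1}^n λ_{ij} ( (c̄_{ij}² − c_{ij}²)(x_j − y_j)² + 2 c_{ij} q_{ij} (x_j − y_j) − q_{ij}² ) ≥ 0 holds. -/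
set_option maxHeartbeats 1000000


/-- Lemma 3.1, scalar weighted-sum form: for a differentiable
function with entrywise gradient bounds on a nonempty open convex set `B`, for
every `x, y ∈ B` there exists `q ∈ ℝ^{m×n}` with `f_i x - f_i y = ∑ j, q i j`,
and the weighted quadratic constraint holds for all nonnegative multipliers,
where `c i j = (ξlo i j + ξhi i j)/2` and `cbar i j = ξhi i j - c i j`. -/
theorem gradient_bounded_quadratic_constraint
    (n m : ℕ) (hn : 0 < n) (hm : 0 < m)
    (ξlo ξhi : Fin m → Fin n → ℝ)
    (hξ : ∀ i j, ξlo i j ≤ ξhi i j)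
    (B : Set (Fin n → ℝ)) (hBne : B.Nonempty) (hBopen : IsOpen B)
    (hBconv : Convex ℝ B)
    (f : (Fin n → ℝ) → (Fin m → ℝ))
    (hdiff : ∀ x ∈ B, DifferentiableAt ℝ f x)
    (hgrad : ∀ x ∈ B, ∀ i j,
      ξlo i j ≤ fderiv ℝ f x (Pi.single j 1) i ∧
      fderiv ℝ f x (Pi.single j 1) i ≤ ξhi i j) :
    ∀ x ∈ B, ∀ y ∈ B, ∃ q : Fin m → Fin n → ℝ,
      (∀ i, f x i - f y i = ∑ j, q i j) ∧
      (∀ lam : Fin m → Fin n → ℝ, (∀ i j, 0 ≤ lam i j) →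
        0 ≤ ∑ i, ∑ j, lam i j *
          (((ξhi i j - (ξlo i j + ξhi i j) / 2) ^ 2 -
              ((ξlo i j + ξhi i j) / 2) ^ 2) * (x j - y j) ^ 2
            + 2 * ((ξlo i j + ξhi i j) / 2) * q i j * (x j - y j)
            - (q i j) ^ 2)) := by
  intro x hx y hy
  -- the line segment
  set γ : ℝ → (Fin n → ℝ) := fun t => y + t • (x - y) with hγ
  have hγmem : ∀ t ∈ Set.Icc (0:ℝ) 1, γ t ∈ B := fun t ht =>
    hBconv.add_smul_sub_mem hy hx ht
  -- the partial-derivative integrands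
  set h : Fin m → Fin n → ℝ → ℝ :=
    fun i j t => fderiv ℝ f (γ t) (Pi.single j 1) i with hh
  have hγcont : Continuous γ := by
    apply continuous_const.add
    exact continuous_id.smul continuous_const
  have hmeas : ∀ i j, Measurable (h i j) := by
    intro i j
    have h1 : Measurable (fun t => fderiv ℝ f (γ t)) :=
      (measurable_fderiv ℝ f).comp hγcont.measurable
    have h2 : Continuous fun L : (Fin n → ℝ) →L[ℝ] (Fin m → ℝ) =>
        L (Pi.single j 1) i := by
      exact (continuous_apply i).comp
        (ContinuousLinearMap.apply ℝ (Fin m → ℝ) (Pi.single j 1)).continuous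
    exact h2.measurable.comp h1
  have hbound : ∀ i j, ∀ t ∈ Set.Icc (0:ℝ) 1,
      ξlo i j ≤ h i j t ∧ h i j t ≤ ξhi i j := by
    intro i j t ht
    exact hgrad (γ t) (hγmem t ht) i j
  -- interval integrability of each h i j
  have hint : ∀ i j, IntervalIntegrable (h i j) MeasureTheory.volume 0 1 := by
    intro i j
    rw [intervalIntegrable_iff_integrableOn_Icc_of_le (by norm_num)]
    apply MeasureTheory.Integrable.mono'
      (MeasureTheory.integrable_const (max |ξlo i j| |ξhi i j|))
      ((hmeas i j).aestronglyMeasurable.restrict)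
    filter_upwards [MeasureTheory.ae_restrict_mem measurableSet_Icc] with t ht
    obtain ⟨h1, h2⟩ := hbound i j t ht
    rw [Real.norm_eq_abs, abs_le]
    constructor
    · calc -(max |ξlo i j| |ξhi i j|) ≤ -|ξlo i j| := by
            simp [le_max_left]
        _ ≤ ξlo i j := neg_abs_le _
        _ ≤ h i j t := h1
    · calc h i j t ≤ ξhi i j := h2
        _ ≤ |ξhi i j| := le_abs_self _
        _ ≤ max |ξlo i j| |ξhi i j| := le_max_right _ _
  -- the candidate q
  refine ⟨fun i j => (x j - y j) * ∫ t in (0:ℝ)..1, h i j t, ?_, ?_⟩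
  · -- FTC along the segment
    intro i
    have hder : ∀ t ∈ Set.uIcc (0:ℝ) 1,
        HasDerivAt (fun t => f (γ t) i)
          (∑ j, (x j - y j) * h i j t) t := by
      intro t ht
      rw [Set.uIcc_of_le (by norm_num : (0:ℝ) ≤ 1)] at ht
      have hγd : HasDerivAt γ (x - y) t := by
        have := ((hasDerivAt_id t).smul_const (x - y)).const_add y
        rw [one_smul] at this; exact this
      have hfd : HasDerivAt (fun t => f (γ t))
          (fderiv ℝ f (γ t) (x - y)) t :=
        ((hdiff (γ t) (hγmem t ht)).hasFDerivAt).comp_hasDerivAt t hγd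
      have := (hasDerivAt_pi.1 hfd) i
      refine this.congr_deriv ?_
      have hxy : (x - y) = ∑ j, (x j - y j) • (Pi.single j 1 : Fin n → ℝ) := by
        ext k
        simp [Pi.single_apply, Finset.sum_ite_eq']
      rw [hxy, map_sum]
      simp only [map_smul, Finset.sum_apply, Pi.smul_apply, smul_eq_mul, h]
    have hintD : IntervalIntegrable (fun t => ∑ j, (x j - y j) * h i j t)
        MeasureTheory.volume 0 1 := by
      have := IntervalIntegrable.sum (μ := MeasureTheory.volume) (a := 0) (b := 1)
        Finset.univ (f := fun j t => (x j - y j) * h i j t)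
        (fun j _ => (hint i j).const_mul _)
      have h2 : (fun t => ∑ j, (x j - y j) * h i j t)
          = ∑ j : Fin n, fun t => (x j - y j) * h i j t := by
        ext t; simp
      rw [h2]; exact this
    have := intervalIntegral.integral_eq_sub_of_hasDerivAt hder hintD
    simp only [hγ] at this
    rw [intervalIntegral.integral_finset_sum
      (fun j _ => (hint i j).const_mul _)] at this
    simp only [intervalIntegral.integral_const_mul, one_smul, zero_smul,
      add_zero, add_sub_cancel] at this
    exact this.symm
  · -- quadratic constraint
    intro lam hlam
    apply Finset.sum_nonneg
    intro i _
    apply Finset.sum_nonneg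
    intro j _
    apply mul_nonneg (hlam i j)
    set I := ∫ t in (0:ℝ)..1, h i j t with hI
    have hIlo : ξlo i j ≤ I := by
      have := intervalIntegral.integral_mono_on (by norm_num : (0:ℝ) ≤ 1)
        (intervalIntegrable_const) (hint i j)
        (fun t ht => (hbound i j t ht).1)
      simpa using this
    have hIhi : I ≤ ξhi i j := by
      have := intervalIntegral.integral_mono_on (by norm_num : (0:ℝ) ≤ 1)
        (hint i j) (intervalIntegrable_const)
        (fun t ht => (hbound i j t ht).2)
      simpa using this
    nlinarith [mul_nonneg (mul_nonneg (sub_nonneg.2 hIhi) (sub_nonneg.2 hIlo))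
      (sq_nonneg (x j - y j)), sq_nonneg (x j - y j)]
end

section
/- Let π : ℝⁿ → ℝᵐ be differentiable on ℝⁿ with π(0) = 0 and ξ̲_{ij} ≤ ∂π_i/∂x_j(y) ≤ ξ̄_{ij} for all y ∈ ℝⁿ, i ∈ {1,…,m}, j ∈ {1,…,n}. Then there exist functions π̃_{ij} : ℝⁿ → ℝ (i ∈ {1,…,m}, j ∈ {1,…,n}) such that for every y ∈ ℝⁿ: (a) π_i(y) = Σ_{j=1}^n π̃_{ij}(y) for every i; (b) π̃_{ij}(y) = 0 whenever y_j = 0; and (c) whenever y_j ≠ 0, the ratio π̃_{ij}(y)/y_j lies in the interval [ξ̲_{ij}, ξ̄_{ij}]. -/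
/-- Mean value theorem helper: if `g` has derivative `g' t ∈ [lo,hi]` everywhere,
then the slope `(g x - g 0)/x` lies in `[lo,hi]` for `x ≠ 0`. -/
lemma slope_mem_Icc_of_deriv_bounds (g g' : ℝ → ℝ)
    (hg : ∀ t, HasDerivAt g (g' t) t) (lo hi : ℝ)
    (hb : ∀ t, g' t ∈ Set.Icc lo hi) (x : ℝ) (hx : x ≠ 0) :
    (g x - g 0) / x ∈ Set.Icc lo hi := by
  have hc : Continuous g := by
    have : Differentiable ℝ g := fun t => (hg t).differentiableAt
    exact this.continuous
  rcases hx.lt_or_gt with h | h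
  · obtain ⟨c, _, hc'⟩ := exists_hasDerivAt_eq_slope g g' h
      (hc.continuousOn) (fun t _ => hg t)
    have : (g 0 - g x) / (0 - x) = (g x - g 0) / x := by
      rw [zero_sub, ← neg_sub (g x), neg_div_neg_eq]
    rw [this] at hc'
    exact hc' ▸ hb c
  · obtain ⟨c, _, hc'⟩ := exists_hasDerivAt_eq_slope g g' h
      (hc.continuousOn) (fun t _ => hg t)
    rw [sub_zero] at hc'
    exact hc' ▸ hb c

/-- Proposition 3.4 decomposition: a differentiable policy with
`π 0 = 0` and entrywise gradient bounds decomposes as a sum of sector-bounded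
components `π̃ i j` with `π̃ i j y = 0` when `y j = 0` and
`π̃ i j y / y j ∈ [ξlo i j, ξhi i j]` when `y j ≠ 0`. -/
theorem gradient_bounded_sector_decomposition
    (n m : ℕ) (hn : 0 < n) (hm : 0 < m)
    (ξlo ξhi : Fin m → Fin n → ℝ)
    (hξ : ∀ i j, ξlo i j ≤ ξhi i j)
    (pol : (Fin n → ℝ) → (Fin m → ℝ))
    (hdiff : Differentiable ℝ pol) (hpol0 : pol 0 = 0)
    (hgrad : ∀ y : Fin n → ℝ, ∀ i j,
      ξlo i j ≤ fderiv ℝ pol y (Pi.single j 1) i ∧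
      fderiv ℝ pol y (Pi.single j 1) i ≤ ξhi i j) :
    ∃ polt : Fin m → Fin n → (Fin n → ℝ) → ℝ,
      ∀ y : Fin n → ℝ,
        (∀ i, pol y i = ∑ j, polt i j y) ∧
        (∀ i j, y j = 0 → polt i j y = 0) ∧
        (∀ i j, y j ≠ 0 → polt i j y / y j ∈ Set.Icc (ξlo i j) (ξhi i j)) := by
  classical
  -- hybrid vectors: zero out the first `k` coordinates
  set T : ℕ → (Fin n → ℝ) → (Fin n → ℝ) :=
    fun k y j => if k ≤ (j : ℕ) then y j else 0 with hTdef
  refine ⟨fun i j y => pol (T (j : ℕ) y) i - pol (T ((j : ℕ) + 1) y) i, fun y => ⟨?_, ?_, ?_⟩⟩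
  · -- telescoping sum
    intro i
    have hT0 : T 0 y = y := funext fun k => by simp [hTdef]
    have hTn : T n y = 0 := funext fun k => by
      simp only [hTdef]
      rw [if_neg (Nat.not_le.mpr k.isLt)]; rfl
    rw [Fin.sum_univ_eq_sum_range
      (fun k => pol (T k y) i - pol (T (k + 1) y) i) n,
      Finset.sum_range_sub' (fun k => pol (T k y) i) n, hT0, hTn, hpol0]
    simp
  · -- vanishing when `y j = 0`
    intro i j hyj
    have : T (j : ℕ) y = T ((j : ℕ) + 1) y := funext fun k => by
      simp only [hTdef]
      by_cases hk : (k : ℕ) = (j : ℕ)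
      · have hkj : k = j := Fin.ext hk
        rw [if_pos (by omega), if_neg (by omega), hkj, hyj]
      · by_cases h2 : (j : ℕ) ≤ (k : ℕ)
        · rw [if_pos h2, if_pos (by omega)]
        · rw [if_neg h2, if_neg (by omega)]
    show pol (T (j : ℕ) y) i - pol (T ((j : ℕ) + 1) y) i = 0
    rw [this, sub_self]
  · -- sector bound via MVT
    intro i j hyj
    set b : Fin n → ℝ := T ((j : ℕ) + 1) y with hb
    set φ : ℝ → (Fin n → ℝ) := fun t => b + t • (Pi.single j 1 : Fin n → ℝ) with hφdef
    have hφ : ∀ t, HasDerivAt φ (Pi.single j (1 : ℝ)) t := fun t => by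
      have h := ((hasDerivAt_id t).smul_const (Pi.single j (1 : ℝ))).const_add b
      rw [one_smul] at h
      rw [hφdef]
      exact h
    have hg : ∀ t, HasDerivAt (fun t => pol (φ t) i)
        (fderiv ℝ pol (φ t) (Pi.single j 1) i) t := fun t => by
      have h1 : HasDerivAt (fun t => pol (φ t))
          (fderiv ℝ pol (φ t) (Pi.single j 1)) t :=
        (hdiff (φ t)).hasFDerivAt.comp_hasDerivAt t (hφ t)
      exact (ContinuousLinearMap.proj (R := ℝ) (φ := fun _ : Fin m => ℝ)
        i).hasFDerivAt.comp_hasDerivAt t h1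
    have hid : T (j : ℕ) y = φ (y j) := funext fun k => by
      simp only [hφdef, hb, hTdef, Pi.add_apply, Pi.smul_apply, smul_eq_mul]
      by_cases hk : k = j
      · subst hk
        rw [if_pos (le_refl _), if_neg (by omega), Pi.single_eq_same]
        ring
      · have hkj : (k : ℕ) ≠ (j : ℕ) := fun h => hk (Fin.ext h)
        rw [Pi.single_eq_of_ne hk]
        by_cases h2 : (j : ℕ) ≤ (k : ℕ)
        · rw [if_pos h2, if_pos (by omega)]; ring
        · rw [if_neg h2, if_neg (by omega)]; ring
    have hzero : b = φ 0 := by simp [hφdef]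
    have key := slope_mem_Icc_of_deriv_bounds (fun t => pol (φ t) i)
      (fun t => fderiv ℝ pol (φ t) (Pi.single j 1) i) hg (ξlo i j) (ξhi i j)
      (fun t => ⟨(hgrad (φ t) i j).1, (hgrad (φ t) i j).2⟩) (y j) hyj
    show (pol (T (j : ℕ) y) i - pol (T ((j : ℕ) + 1) y) i) / y j ∈ Set.Icc (ξlo i j) (ξhi i j)
    simpa [← hid, ← hzero] using key
end

section
/- Let x ∈ ℝⁿ and q ∈ ℝ^{m×n}. The following are equivalent: (a) for all i ∈ {1,…,m}, j ∈ {1,…,n}, the inequality (c̄_{ij}² − c_{ij}²) x_j² + 2 c_{ij} q_{ij} x_j − q_{ij}² ≥ 0 holds; (b) for all i ∈ {1,…,m}, j ∈ {1,…,n}, there exists δ_{ij} ∈ [c_{ij} − c̄_{ij}, c_{ij} + c̄_{ij}] such that q_{ij} = δ_{ij} x_j (in particular q_{ij} = 0 whenever x_j = 0). -/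
lemma pointwise_sector (c cb x q : ℝ) (hcb : 0 ≤ cb) :
    0 ≤ (cb ^ 2 - c ^ 2) * x ^ 2 + 2 * c * q * x - q ^ 2 ↔
    ∃ δ ∈ Set.Icc (c - cb) (c + cb), q = δ * x := by
  constructor
  · intro h
    rcases eq_or_ne x 0 with hx | hx
    · subst hx
      refine ⟨c, ⟨by linarith, by linarith⟩, ?_⟩
      have hq : q = 0 := by nlinarith [sq_nonneg q]
      simp [hq]
    · refine ⟨q / x, ⟨?_, ?_⟩, by field_simp⟩
      · rcases lt_or_gt_of_ne hx with hx' | hx'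
        · rw [le_div_iff_of_neg hx']
          nlinarith [mul_nonneg hcb (neg_pos.2 hx').le]
        · rw [le_div_iff₀ hx']
          nlinarith [mul_nonneg hcb hx'.le]
      · rcases lt_or_gt_of_ne hx with hx' | hx'
        · rw [div_le_iff_of_neg hx']
          nlinarith [mul_nonneg hcb (neg_pos.2 hx').le]
        · rw [div_le_iff₀ hx']
          nlinarith [mul_nonneg hcb hx'.le]
  · rintro ⟨δ, ⟨h1, h2⟩, rfl⟩
    nlinarith [sq_nonneg x, mul_nonneg (mul_nonneg (sub_nonneg.2 h1) (sub_nonneg.2 h2)) (sq_nonneg x)]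

/-- Lemma 3.5: the pointwise quadratic constraints
`φ_{ij}(x,q) ≥ 0` hold iff each `q i j` is a sector-bounded multiple of `x j`,
where `c i j = (ξlo i j + ξhi i j)/2` and `cbar i j = ξhi i j - c i j`. -/
theorem quadratic_constraint_iff_sector_bounded
    (n m : ℕ) (hn : 0 < n) (hm : 0 < m)
    (ξlo ξhi : Fin m → Fin n → ℝ)
    (hξ : ∀ i j, ξlo i j ≤ ξhi i j)
    (x : Fin n → ℝ) (q : Fin m → Fin n → ℝ) :
    (∀ i j,
      0 ≤ ((ξhi i j - (ξlo i j + ξhi i j) / 2) ^ 2 -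
            ((ξlo i j + ξhi i j) / 2) ^ 2) * (x j) ^ 2
          + 2 * ((ξlo i j + ξhi i j) / 2) * q i j * x j - (q i j) ^ 2)
    ↔ (∀ i j, ∃ δ ∈ Set.Icc
        ((ξlo i j + ξhi i j) / 2 - (ξhi i j - (ξlo i j + ξhi i j) / 2))
        ((ξlo i j + ξhi i j) / 2 + (ξhi i j - (ξlo i j + ξhi i j) / 2)),
        q i j = δ * x j) := by
  refine forall₂_congr fun i j => ?_
  exact pointwise_sector _ _ _ _ (by linarith [hξ i j])
end

section
/- Let H be a real inner product space, let c, c̄ ∈ ℝ with c ≤ 0 ≤ c̄, and let x, q ∈ H satisfy (c − c̄)‖x‖ ≤ ‖q‖ ≤ (c + c̄)‖x‖. Then (c̄² − c²)‖x‖² + 2c⟨q, x⟩ − ‖q‖² ≥ 0. -/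
/-- sufficiency direction of Lemma 3.6, case `c ≤ 0`: the
sector-bound-in-norm condition `(c − cbar)‖x‖ ≤ ‖q‖ ≤ (c + cbar)‖x‖` implies
the quadratic constraint `(cbar² − c²)‖x‖² + 2c⟨q,x⟩ − ‖q‖² ≥ 0`. -/
theorem sector_bound_implies_quadratic_constraint
    (H : Type*) [NormedAddCommGroup H] [InnerProductSpace ℝ H]
    (c cbar : ℝ) (hc : c ≤ 0) (hcbar : 0 ≤ cbar) (x q : H)
    (hlo : (c - cbar) * ‖x‖ ≤ ‖q‖) (hhi : ‖q‖ ≤ (c + cbar) * ‖x‖) :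
    0 ≤ (cbar ^ 2 - c ^ 2) * ‖x‖ ^ 2 + 2 * c * (inner ℝ q x : ℝ) - ‖q‖ ^ 2 := by
  have h1 : (inner ℝ q x : ℝ) ≤ ‖q‖ * ‖x‖ := real_inner_le_norm q x
  nlinarith [mul_nonneg (sub_nonneg.2 hhi) (sub_nonneg.2 hlo), norm_nonneg x, norm_nonneg q]
end

section
/- Let n, m be positive integers, A ∈ ℝ^{n×n}, B ∈ ℝ^{n×m}. Let π : ℝⁿ → ℝᵐ be differentiable with π(0) = 0 and ξ̲_{ij} ≤ ∂π_i/∂x_j(x) ≤ ξ̄_{ij} for all x ∈ ℝⁿ, i ∈ {1,…,m}, j ∈ {1,…,n}. Suppose there exist a symmetric positive semidefinite matrix P ∈ ℝ^{n×n}, nonnegative multipliers λ_{ij} ≥ 0, and a scalar γ > 0 such that for every nonzero triple (x, q, e) ∈ ℝⁿ × ℝ^{m×n} × ℝᵐ, writing w ∈ ℝᵐ for the vector with w_i = Σ_{j=1}^n q_{ij}, the strict inequality 2 xᵀ P (A x + B w + B e) + Σ_{i,j} λ_{ij}( (c̄_{ij}² − c_{ij}²) x_j² + 2 c_{ij} q_{ij}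 x_j − q_{ij}² ) + γ⁻¹ |x|² − γ |e|² < 0 holds. Then for every continuous function e : [0,∞) → ℝᵐ and every continuously differentiable trajectory x : [0,∞) → ℝⁿ satisfying x(0) = 0 and x′(t) = A x(t) + B (π(x(t)) + e(t)) for all t ≥ 0, one has ∫₀ᵀ |x(t)|² dt ≤ γ² ∫₀ᵀ |e(t)|² dt for every T ≥ 0. -/
open Matrix

section aux

variable {n m : ℕ}

private lemma matMulVec_continuous (A : Matrix (Fin n) (Fin m) ℝ) :
    Continuous (fun v => A.mulVec v) := by
  have := LinearMap.continuous_of_finiteDimensional A.mulVecLin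
  simpa [Matrix.coe_mulVecLin] using this

private lemma quadform_deriv (P : Matrix (Fin n) (Fin n) ℝ) (hPsymm : P.IsSymm)
    (x : ℝ → (Fin n → ℝ)) (v : Fin n → ℝ) (t : ℝ)
    (hx : HasDerivAt x v t) :
    HasDerivAt (fun s => x s ⬝ᵥ P.mulVec (x s)) (2 * (x t ⬝ᵥ P.mulVec v)) t := by
  have hxi : ∀ i, HasDerivAt (fun s => x s i) (v i) t := fun i =>
    ((ContinuousLinearMap.proj (R := ℝ) (φ := fun _ : Fin n => ℝ) i).hasFDerivAt.comp_hasDerivAt t hx)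
  have h : HasDerivAt (fun s => ∑ i, x s i * ∑ j, P i j * x s j)
      (∑ i, (v i * ∑ j, P i j * x t j + x t i * ∑ j, P i j * v j)) t := by
    apply HasDerivAt.fun_sum
    intro i _
    exact (hxi i).mul (HasDerivAt.fun_sum fun j _ => (hxi j).const_mul (P i j))
  have heq : (fun s => ∑ i, x s i * ∑ j, P i j * x s j) = fun s => x s ⬝ᵥ P.mulVec (x s) := by
    funext s
    simp [dotProduct, Matrix.mulVec, Finset.mul_sum]
  rw [heq] at h
  convert h using 1
  have hsymm : ∀ i j, P j i = P i j := fun i j => hPsymm.apply i j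
  simp only [dotProduct, Matrix.mulVec]
  rw [Finset.sum_add_distrib]
  have key : ∑ i, v i * ∑ j, P i j * x t j = ∑ i, x t i * ∑ j, P i j * v j := by
    simp only [Finset.mul_sum]
    rw [Finset.sum_comm]
    exact Finset.sum_congr rfl fun a _ => Finset.sum_congr rfl fun b _ => by rw [hsymm b a]; ring
  rw [key]
  simp [dotProduct, Matrix.mulVec, Finset.mul_sum, two_mul, Finset.sum_add_distrib]

private lemma pointwise_diss
    (A : Matrix (Fin n) (Fin n) ℝ) (B : Matrix (Fin n) (Fin m) ℝ)
    (ξlo ξhi : Fin m → Fin n → ℝ)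
    (pol : (Fin n → ℝ) → (Fin m → ℝ))
    (hdiff : Differentiable ℝ pol) (hpol0 : pol 0 = 0)
    (hgrad : ∀ x : Fin n → ℝ, ∀ i j,
      ξlo i j ≤ fderiv ℝ pol x (Pi.single j 1) i ∧
      fderiv ℝ pol x (Pi.single j 1) i ≤ ξhi i j)
    (P : Matrix (Fin n) (Fin n) ℝ)
    (lam : Fin m → Fin n → ℝ) (hlam : ∀ i j, 0 ≤ lam i j)
    (γ : ℝ)
    (hSDP : ∀ (x : Fin n → ℝ) (q : Fin m → Fin n → ℝ) (e : Fin m → ℝ),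
      (x, q, e) ≠ 0 →
      2 * (x ⬝ᵥ P.mulVec
            (A.mulVec x + B.mulVec (fun i => ∑ j, q i j) + B.mulVec e))
        + (∑ i, ∑ j, lam i j *
            (((ξhi i j - (ξlo i j + ξhi i j) / 2) ^ 2 -
                ((ξlo i j + ξhi i j) / 2) ^ 2) * (x j) ^ 2
              + 2 * ((ξlo i j + ξhi i j) / 2) * q i j * x j - (q i j) ^ 2))
        + γ⁻¹ * (∑ j, (x j) ^ 2) - γ * (∑ i, (e i) ^ 2) < 0)
    (y : Fin n → ℝ) (e : Fin m → ℝ) :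
    2 * (y ⬝ᵥ P.mulVec (A.mulVec y + B.mulVec (pol y + e)))
      ≤ γ * (∑ i, (e i) ^ 2) - γ⁻¹ * (∑ j, (y j) ^ 2) := by
  have hc : ∀ i : Fin m, ∃ c : ℝ, fderiv ℝ pol (c • y) y i = pol y i := by
    intro i
    have hg : ∀ s : ℝ, HasDerivAt (fun s : ℝ => pol (s • y) i) (fderiv ℝ pol (s • y) y i) s := by
      intro s
      have h1 : HasDerivAt (fun s : ℝ => s • y) y s := by
        simpa using (hasDerivAt_id s).smul_const y
      have h2 := ((hdiff (s • y)).hasFDerivAt.comp_hasDerivAt s h1)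
      exact ((ContinuousLinearMap.proj (R := ℝ) (φ := fun _ : Fin m => ℝ) i).hasFDerivAt.comp_hasDerivAt s h2)
    obtain ⟨c, _, hc⟩ := exists_hasDerivAt_eq_slope (fun s : ℝ => pol (s • y) i)
      (fun s => fderiv ℝ pol (s • y) y i) one_pos
      (fun s _ => (hg s).continuousAt.continuousWithinAt)
      (fun s _ => hg s)
    refine ⟨c, ?_⟩
    simpa [hpol0] using hc
  choose c hcspec using hc
  set q : Fin m → Fin n → ℝ := fun i j => y j * fderiv ℝ pol (c i • y) (Pi.single j 1) i with hq
  have hsum : ∀ i, ∑ j, q i j = pol y i := by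
    intro i
    rw [← hcspec i]
    calc ∑ j, q i j = ∑ j, (fderiv ℝ pol (c i • y) (Pi.single j (y j))) i := by
          refine Finset.sum_congr rfl fun j _ => ?_
          have hsingle : (Pi.single j (y j) : Fin n → ℝ) = y j • (Pi.single j 1 : Fin n → ℝ) := by
            funext k
            simp [Pi.single_apply, mul_ite]
          rw [hq, hsingle]
          simp
      _ = fderiv ℝ pol (c i • y) y i := by
          rw [← Finset.sum_apply, ← map_sum, Finset.univ_sum_single]
  have hS : 0 ≤ ∑ i, ∑ j, lam i j *
      (((ξhi i j - (ξlo i j + ξhi i j) / 2) ^ 2 -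
          ((ξlo i j + ξhi i j) / 2) ^ 2) * (y j) ^ 2
        + 2 * ((ξlo i j + ξhi i j) / 2) * q i j * y j - (q i j) ^ 2) := by
    apply Finset.sum_nonneg; intro i _
    apply Finset.sum_nonneg; intro j _
    have h1 := (hgrad (c i • y) i j).1
    have h2 := (hgrad (c i • y) i j).2
    have hkey : (((ξhi i j - (ξlo i j + ξhi i j) / 2) ^ 2 -
          ((ξlo i j + ξhi i j) / 2) ^ 2) * (y j) ^ 2
        + 2 * ((ξlo i j + ξhi i j) / 2) * q i j * y j - (q i j) ^ 2)
        = (y j) ^ 2 * ((ξhi i j - fderiv ℝ pol (c i • y) (Pi.single j 1) i) *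
            (fderiv ℝ pol (c i • y) (Pi.single j 1) i - ξlo i j)) := by
      simp only [hq]; ring
    rw [hkey]
    have hnn := mul_nonneg (sub_nonneg.2 h2) (sub_nonneg.2 h1)
    exact mul_nonneg (hlam i j) (mul_nonneg (sq_nonneg _) hnn)
  by_cases h0 : (y, q, e) = (0 : (Fin n → ℝ) × (Fin m → Fin n → ℝ) × (Fin m → ℝ))
  · have hy0 : y = 0 := by simpa using congrArg Prod.fst h0
    have he0 : e = 0 := by simpa using congrArg (fun p => p.2.2) h0
    simp [hy0, he0, hpol0, dotProduct]
  · have h := hSDP y q e h0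
    have hw : (fun i => ∑ j, q i j) = pol y := funext hsum
    rw [hw] at h
    have hBe : B.mulVec (pol y + e) = B.mulVec (pol y) + B.mulVec e := by
      rw [Matrix.mulVec_add]
    rw [hBe, ← add_assoc]
    linarith

end aux

/-- Theorem 3.7, thm:lti_stable: if the SDP quadratic form
(dissipation inequality form) is strictly negative on nonzero `(x, q, e)`,
then every trajectory of `x' = A x + B (π(x) + e)` starting at `0` satisfies
the finite `L₂`-gain bound `∫₀ᵀ |x|² ≤ γ² ∫₀ᵀ |e|²` for all `T ≥ 0`.
Here `c i j = (ξlo i j + ξhi i j)/2`, `cbar i j = ξhi i j - c i j`, and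
`w i = ∑ j, q i j`. -/
theorem lti_stability_certificate
    (n m : ℕ) (hn : 0 < n) (hm : 0 < m)
    (A : Matrix (Fin n) (Fin n) ℝ) (B : Matrix (Fin n) (Fin m) ℝ)
    (ξlo ξhi : Fin m → Fin n → ℝ) (hξ : ∀ i j, ξlo i j ≤ ξhi i j)
    (pol : (Fin n → ℝ) → (Fin m → ℝ))
    (hdiff : Differentiable ℝ pol) (hpol0 : pol 0 = 0)
    (hgrad : ∀ x : Fin n → ℝ, ∀ i j,
      ξlo i j ≤ fderiv ℝ pol x (Pi.single j 1) i ∧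
      fderiv ℝ pol x (Pi.single j 1) i ≤ ξhi i j)
    (P : Matrix (Fin n) (Fin n) ℝ) (hPsymm : P.IsSymm) (hPpsd : P.PosSemidef)
    (lam : Fin m → Fin n → ℝ) (hlam : ∀ i j, 0 ≤ lam i j)
    (γ : ℝ) (hγ : 0 < γ)
    (hSDP : ∀ (x : Fin n → ℝ) (q : Fin m → Fin n → ℝ) (e : Fin m → ℝ),
      (x, q, e) ≠ 0 →
      2 * (x ⬝ᵥ P.mulVec
            (A.mulVec x + B.mulVec (fun i => ∑ j, q i j) + B.mulVec e))
        + (∑ i, ∑ j, lam i j *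
            (((ξhi i j - (ξlo i j + ξhi i j) / 2) ^ 2 -
                ((ξlo i j + ξhi i j) / 2) ^ 2) * (x j) ^ 2
              + 2 * ((ξlo i j + ξhi i j) / 2) * q i j * x j - (q i j) ^ 2))
        + γ⁻¹ * (∑ j, (x j) ^ 2) - γ * (∑ i, (e i) ^ 2) < 0) :
    ∀ e : ℝ → (Fin m → ℝ), ContinuousOn e (Set.Ici (0 : ℝ)) →
    ∀ x : ℝ → (Fin n → ℝ), x 0 = 0 →
    (∀ t ∈ Set.Ici (0 : ℝ),
      HasDerivAt x (A.mulVec (x t) + B.mulVec (pol (x t) + e t)) t) →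
    ∀ T ≥ (0 : ℝ),
      (∫ t in (0 : ℝ)..T, ∑ j, (x t j) ^ 2)
        ≤ γ ^ 2 * ∫ t in (0 : ℝ)..T, ∑ i, (e t i) ^ 2 := by
  intro e he x hx0 hx T hT
  set d : ℝ → (Fin n → ℝ) := fun t => A.mulVec (x t) + B.mulVec (pol (x t) + e t) with hd
  set V : ℝ → ℝ := fun t => x t ⬝ᵥ P.mulVec (x t) with hV
  set V' : ℝ → ℝ := fun t => 2 * (x t ⬝ᵥ P.mulVec (d t)) with hV'
  have huIcc : Set.uIcc (0:ℝ) T = Set.Icc 0 T := Set.uIcc_of_le hT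
  have hIccIci : Set.Icc (0:ℝ) T ⊆ Set.Ici 0 := fun t ht => ht.1
  -- continuity of x on Ici 0
  have hxc : ContinuousOn x (Set.Ici (0:ℝ)) :=
    fun t ht => (hx t ht).continuousAt.continuousWithinAt
  -- continuity of d on Ici 0
  have hdc : ContinuousOn d (Set.Ici (0:ℝ)) := by
    apply ContinuousOn.add
    · exact (matMulVec_continuous A).comp_continuousOn hxc
    · exact (matMulVec_continuous B).comp_continuousOn
        ((hdiff.continuous.comp_continuousOn hxc).add he)
  -- continuity of V' on Icc 0 T
  have hV'c : ContinuousOn V' (Set.Icc (0:ℝ) T) := by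
    have hPd : ContinuousOn (fun t => P.mulVec (d t)) (Set.Icc (0:ℝ) T) :=
      (matMulVec_continuous P).comp_continuousOn (hdc.mono hIccIci)
    have : ContinuousOn (fun t => x t ⬝ᵥ P.mulVec (d t)) (Set.Icc (0:ℝ) T) := by
      simp only [dotProduct]
      apply continuousOn_finset_sum
      intro i _
      exact ((continuous_apply i).comp_continuousOn (hxc.mono hIccIci)).mul
        ((continuous_apply i).comp_continuousOn hPd)
    exact continuousOn_const.mul this
  -- derivative of V
  have hVd : ∀ t ∈ Set.uIcc (0:ℝ) T, HasDerivAt V (V' t) t := by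
    intro t ht
    rw [huIcc] at ht
    exact quadform_deriv P hPsymm x (d t) t (hx t (hIccIci ht))
  have hV'int : IntervalIntegrable V' MeasureTheory.volume 0 T := by
    apply ContinuousOn.intervalIntegrable
    rwa [huIcc]
  have hftc := intervalIntegral.integral_eq_sub_of_hasDerivAt hVd hV'int
  -- pointwise bound
  have hpw : ∀ t, V' t ≤ γ * (∑ i, (e t i) ^ 2) - γ⁻¹ * (∑ j, (x t j) ^ 2) := by
    intro t
    exact pointwise_diss A B ξlo ξhi pol hdiff hpol0 hgrad P lam hlam γ hSDP (x t) (e t)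
  -- integrability of the component integrands
  have hxint : IntervalIntegrable (fun t => ∑ j, (x t j) ^ 2) MeasureTheory.volume 0 T := by
    apply ContinuousOn.intervalIntegrable
    rw [huIcc]
    apply continuousOn_finset_sum
    intro j _
    exact (((continuous_apply j).comp_continuousOn (hxc.mono hIccIci))).pow 2
  have heint : IntervalIntegrable (fun t => ∑ i, (e t i) ^ 2) MeasureTheory.volume 0 T := by
    apply ContinuousOn.intervalIntegrable
    rw [huIcc]
    apply continuousOn_finset_sum
    intro i _
    exact (((continuous_apply i).comp_continuousOn (he.mono hIccIci))).pow 2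
  have hgint : IntervalIntegrable
      (fun t => γ * (∑ i, (e t i) ^ 2) - γ⁻¹ * (∑ j, (x t j) ^ 2))
      MeasureTheory.volume 0 T :=
    (heint.const_mul γ).sub (hxint.const_mul γ⁻¹)
  have hmono : ∫ t in (0:ℝ)..T, V' t ≤
      ∫ t in (0:ℝ)..T, (γ * (∑ i, (e t i) ^ 2) - γ⁻¹ * (∑ j, (x t j) ^ 2)) :=
    intervalIntegral.integral_mono_on hT hV'int hgint (fun t _ => hpw t)
  have hsplit : ∫ t in (0:ℝ)..T, (γ * (∑ i, (e t i) ^ 2) - γ⁻¹ * (∑ j, (x t j) ^ 2))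
      = γ * (∫ t in (0:ℝ)..T, ∑ i, (e t i) ^ 2) - γ⁻¹ * (∫ t in (0:ℝ)..T, ∑ j, (x t j) ^ 2) := by
    rw [intervalIntegral.integral_sub (heint.const_mul γ) (hxint.const_mul γ⁻¹),
      intervalIntegral.integral_const_mul, intervalIntegral.integral_const_mul]
  have hV0 : V 0 = 0 := by simp [hV, hx0]
  have hVT : 0 ≤ V T := by
    have := hPpsd.dotProduct_mulVec_nonneg (x T)
    simpa using this
  have hbound : γ⁻¹ * (∫ t in (0:ℝ)..T, ∑ j, (x t j) ^ 2)
      ≤ γ * (∫ t in (0:ℝ)..T, ∑ i, (e t i) ^ 2) := by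
    have : (0:ℝ) ≤ γ * (∫ t in (0:ℝ)..T, ∑ i, (e t i) ^ 2)
        - γ⁻¹ * (∫ t in (0:ℝ)..T, ∑ j, (x t j) ^ 2) := by
      calc (0:ℝ) ≤ V T := hVT
        _ = V T - V 0 := by rw [hV0]; ring
        _ = ∫ t in (0:ℝ)..T, V' t := hftc.symm
        _ ≤ _ := by rw [← hsplit]; exact hmono
    linarith
  have hγ' : γ ≠ 0 := ne_of_gt hγ
  have := mul_le_mul_of_nonneg_left hbound (le_of_lt hγ)
  calc (∫ t in (0:ℝ)..T, ∑ j, (x t j) ^ 2)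
      = γ * (γ⁻¹ * (∫ t in (0:ℝ)..T, ∑ j, (x t j) ^ 2)) := by
        field_simp
    _ ≤ γ * (γ * (∫ t in (0:ℝ)..T, ∑ i, (e t i) ^ 2)) := this
    _ = γ ^ 2 * (∫ t in (0:ℝ)..T, ∑ i, (e t i) ^ 2) := by ring
end

section
/- Let n, m, p, r be positive integers, A ∈ ℝ^{n×n}, B ∈ ℝ^{n×m}, and filter matrices A_ψ ∈ ℝ^{p×p}, B_ψ^v ∈ ℝ^{p×n}, B_ψ^y ∈ ℝ^{p×n}, C_ψ ∈ ℝ^{r×p}, D_ψ^v ∈ ℝ^{r×n}, D_ψ^y ∈ ℝ^{r×n}, and a symmetric matrix M_g ∈ ℝ^{r×r}. Let π : ℝⁿ → ℝᵐ be differentiable with π(0) = 0 and ξ̲_{ij} ≤ ∂π_i/∂x_j(x) ≤ ξ̄_{ij} for all x ∈ ℝⁿ, i ∈ {1,…,m}, j ∈ {1,…,n}. Suppose there exist a symmetric positive semidefinite matrix P ∈ ℝ^{(n+p)×(n+p)}, nonnegative multipliers λ_{ij} ≥ 0, and a scalar γ > 0 such that for every nonzero tuple (x_G, ψ, q, v,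 e) ∈ ℝⁿ × ℝ^p × ℝ^{m×n} × ℝⁿ × ℝᵐ, writing x̄ = (x_G, ψ) ∈ ℝ^{n+p}, w ∈ ℝᵐ with w_i = Σ_{j=1}^n q_{ij}, and z = D_ψ^y x_G + C_ψ ψ + D_ψ^v v ∈ ℝ^r, the strict inequality 2 x̄ᵀ P (A x_G + B w + B e + v, B_ψ^y x_G + A_ψ ψ + B_ψ^v v) + zᵀ M_g z + Σ_{i,j} λ_{ij}( (c̄_{ij}² − c_{ij}²) (x_G)_j² + 2 c_{ij} q_{ij} (x_G)_j − q_{ij}² ) + γ⁻¹ |x_G|² − γ |e|² < 0 holds. Then for every continuous e : [0,∞) → ℝᵐ, every continuous g : [0,∞) × ℝⁿ → ℝⁿ, and every continuously differentiable pair of trajectories x_G : [0,∞) → ℝⁿ, ψ : [0,∞) → ℝ^p satisfying x_G(0) = 0, ψ(0) = 0, x_G′(t) = A x_G(t) + B (π(x_G(t)) + e(t)) + v(t) and ψ′(t) = A_ψ ψ(t) + B_ψ^v v(t) + B_ψ^y x_G(t) where v(t) = g(t, x_G(t)), and such that the hard IQC condition ∫₀ᵀ z(t)ᵀ M_g z(t)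 dt ≥ 0 holds for all T ≥ 0 with z(t) = C_ψ ψ(t) + D_ψ^v v(t) + D_ψ^y x_G(t), one has ∫₀ᵀ |x_G(t)|² dt ≤ γ² ∫₀ᵀ |e(t)|² dt for every T ≥ 0. -/
set_option maxHeartbeats 2000000

open MeasureTheory


open Matrix

lemma aux_exists_q {n m : ℕ} (ξlo ξhi : Fin m → Fin n → ℝ)
    (pol : (Fin n → ℝ) → (Fin m → ℝ))
    (hdiff : Differentiable ℝ pol) (hpol0 : pol 0 = 0)
    (hgrad : ∀ x : Fin n → ℝ, ∀ i j,
      ξlo i j ≤ fderiv ℝ pol x (Pi.single j 1) i ∧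
      fderiv ℝ pol x (Pi.single j 1) i ≤ ξhi i j)
    (x : Fin n → ℝ) :
    ∃ q : Fin m → Fin n → ℝ,
      (∀ i, ∑ j, q i j = pol x i) ∧
      (∀ i j, ∃ θ : ℝ, ξlo i j ≤ θ ∧ θ ≤ ξhi i j ∧ q i j = θ * x j) := by
  classical
  set D : Fin m → Fin n → ℝ → ℝ :=
    fun i j s => fderiv ℝ pol (s • x) (Pi.single j 1) i with hD
  have hmeas : ∀ i j, Measurable (D i j) := by
    intro i j
    have h1 : Measurable (fun y : Fin n → ℝ => fderiv ℝ pol y (Pi.single j 1)) :=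
      measurable_fderiv_apply_const ℝ pol _
    have h2 : Measurable (fun s : ℝ => s • x) :=
      (continuous_id.smul continuous_const).measurable
    exact ((measurable_pi_apply i).comp h1).comp h2
  have hbd : ∀ i j s, |D i j s| ≤ |ξlo i j| + |ξhi i j| := by
    intro i j s
    obtain ⟨h1, h2⟩ := hgrad (s • x) i j
    rw [abs_le]
    constructor
    · have := neg_abs_le (ξlo i j)
      have := abs_nonneg (ξhi i j)
      linarith
    · have := le_abs_self (ξhi i j)
      have := abs_nonneg (ξlo i j)
      linarith
  have hint : ∀ i j, IntervalIntegrable (D i j) volume 0 1 := by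
    intro i j
    rw [intervalIntegrable_iff]
    apply Measure.integrableOn_of_bounded (M := |ξlo i j| + |ξhi i j|)
    · exact measure_Ioc_lt_top.ne
    · exact (hmeas i j).aestronglyMeasurable
    · exact Filter.Eventually.of_forall fun s => hbd i j s
  set θf : Fin m → Fin n → ℝ := fun i j => ∫ s in (0:ℝ)..1, D i j s with hθf
  refine ⟨fun i j => θf i j * x j, ?_, ?_⟩
  · intro i
    have hrepr : ∀ y : Fin n → ℝ, fderiv ℝ pol y x i
        = ∑ j, x j * fderiv ℝ pol y (Pi.single j 1) i := by
      intro y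
      have hx : x = ∑ j, x j • (Pi.single j 1 : Fin n → ℝ) := by
        funext k
        simp [Pi.single_apply, Finset.sum_ite_eq']
      conv_lhs => rw [hx]
      rw [map_sum (fderiv ℝ pol y) (fun j => x j • (Pi.single j 1 : Fin n → ℝ)) Finset.univ]
      simp [Finset.sum_apply]
    have hderiv : ∀ s ∈ Set.uIcc (0:ℝ) 1,
        HasDerivAt (fun s : ℝ => pol (s • x) i) (fderiv ℝ pol (s • x) x i) s := by
      intro s _
      have h1 : HasDerivAt (fun s : ℝ => s • x) x s := by
        simpa using (hasDerivAt_id s).smul_const x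
      have h2 : HasDerivAt (fun s : ℝ => pol (s • x)) (fderiv ℝ pol (s • x) x) s :=
        (hdiff (s • x)).hasFDerivAt.comp_hasDerivAt s h1
      exact hasDerivAt_pi.1 h2 i
    have hfeq : (fun s : ℝ => fderiv ℝ pol (s • x) x i)
        = fun s => ∑ j, x j * D i j s := by
      funext s; exact hrepr (s • x)
    have hint2 : IntervalIntegrable (fun s : ℝ => fderiv ℝ pol (s • x) x i) volume 0 1 := by
      rw [hfeq]
      have h := IntervalIntegrable.sum (f := fun j s => x j * D i j s) Finset.univ
        (fun j _ => (hint i j).const_mul (x j))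
      have he : (∑ j : Fin n, fun s => x j * D i j s)
          = fun s => ∑ j : Fin n, x j * D i j s := by
        funext s; simp [Finset.sum_apply]
      rwa [he] at h
    have hFTC := intervalIntegral.integral_eq_sub_of_hasDerivAt hderiv hint2
    simp only [one_smul, zero_smul, hpol0, Pi.zero_apply, sub_zero] at hFTC
    rw [hfeq] at hFTC
    rw [intervalIntegral.integral_finset_sum (f := fun j s => x j * D i j s)
      (fun j _ => (hint i j).const_mul (x j))] at hFTC
    simp only [intervalIntegral.integral_const_mul] at hFTC
    rw [← hFTC]
    exact Finset.sum_congr rfl fun j _ => mul_comm _ _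
  · intro i j
    refine ⟨θf i j, ?_, ?_, rfl⟩
    · have h := intervalIntegral.integral_mono_on (le_of_lt one_pos)
        intervalIntegrable_const (hint i j)
        (fun s _ => (hgrad (s • x) i j).1)
      simpa using h
    · have h := intervalIntegral.integral_mono_on (le_of_lt one_pos)
        (hint i j) intervalIntegrable_const
        (fun s _ => (hgrad (s • x) i j).2)
      simpa using h

lemma aux_quad_deriv {N : ℕ} (P : Matrix (Fin N) (Fin N) ℝ) (hP : P.IsSymm)
    {u : ℝ → Fin N → ℝ} {ud : Fin N → ℝ} {t : ℝ} (hu : HasDerivAt u ud t) :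
    HasDerivAt (fun s => u s ⬝ᵥ P.mulVec (u s)) (2 * (u t ⬝ᵥ P.mulVec ud)) t := by
  have hcomp : ∀ k, HasDerivAt (fun s => u s k) (ud k) t := fun k => hasDerivAt_pi.1 hu k
  have h1 : HasDerivAt (fun s => ∑ k, ∑ l, u s k * (P k l * u s l))
      (∑ k, ∑ l, (ud k * (P k l * u t l) + u t k * (P k l * ud l))) t := by
    refine HasDerivAt.fun_sum fun k _ => HasDerivAt.fun_sum fun l _ => ?_
    exact (hcomp k).mul ((hcomp l).const_mul (P k l))
  have hfun : (fun s => u s ⬝ᵥ P.mulVec (u s)) = fun s => ∑ k, ∑ l, u s k * (P k l * u s l) := by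
    funext s
    simp [dotProduct, mulVec, Finset.mul_sum]
  have hval : ∑ k, ∑ l, (ud k * (P k l * u t l) + u t k * (P k l * ud l))
      = 2 * (u t ⬝ᵥ P.mulVec ud) := by
    have hdot : u t ⬝ᵥ P.mulVec ud = ∑ k, ∑ l, u t k * (P k l * ud l) := by
      simp [dotProduct, mulVec, Finset.mul_sum]
    have hswap : ∑ k, ∑ l, ud k * (P k l * u t l) = ∑ k, ∑ l, u t k * (P k l * ud l) := by
      rw [Finset.sum_comm]
      refine Finset.sum_congr rfl fun k _ => Finset.sum_congr rfl fun l _ => ?_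
      rw [hP.apply l k]; ring
    simp only [Finset.sum_add_distrib, hswap, hdot]; ring
  rw [hfun, ← hval]; exact h1

lemma aux_sector (lo hi θ xx : ℝ) (h1 : lo ≤ θ) (h2 : θ ≤ hi) :
    0 ≤ ((hi - (lo + hi) / 2) ^ 2 - ((lo + hi) / 2) ^ 2) * xx ^ 2
      + 2 * ((lo + hi) / 2) * (θ * xx) * xx - (θ * xx) ^ 2 := by
  nlinarith [mul_nonneg (mul_nonneg (sub_nonneg.2 h2) (sub_nonneg.2 h1)) (sq_nonneg xx)]

lemma aux_append_zero {n p : ℕ} :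
    Fin.append (0 : Fin n → ℝ) (0 : Fin p → ℝ) = 0 := by
  funext k
  refine Fin.addCases (fun j => ?_) (fun j => ?_) k <;> simp

lemma aux_cont_mulVec {k l : ℕ} (M : Matrix (Fin k) (Fin l) ℝ) :
    Continuous (fun v : Fin l → ℝ => M.mulVec v) := by
  refine continuous_pi fun i => ?_
  simp only [mulVec, dotProduct]
  exact continuous_finset_sum _ fun j _ => (continuous_const.mul (continuous_apply j))

lemma aux_cont_dot {k : ℕ} {f g : ℝ → Fin k → ℝ} {S : Set ℝ}
    (hf : ContinuousOn f S) (hg : ContinuousOn g S) :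
    ContinuousOn (fun t => f t ⬝ᵥ g t) S := by
  simp only [dotProduct]
  exact continuousOn_finset_sum _ fun i _ =>
    (((continuous_apply i).comp_continuousOn hf).mul
      ((continuous_apply i).comp_continuousOn hg))

lemma aux_cont_append {n p : ℕ} {f : ℝ → Fin n → ℝ} {g : ℝ → Fin p → ℝ} {S : Set ℝ}
    (hf : ContinuousOn f S) (hg : ContinuousOn g S) :
    ContinuousOn (fun t => Fin.append (f t) (g t)) S := by
  refine continuousOn_pi.2 fun k => ?_
  refine Fin.addCases (fun j => ?_) (fun j => ?_) k
  · simpa only [Fin.append_left, Function.comp_def] using (continuous_apply j).comp_continuousOn hf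
  · simpa only [Fin.append_right, Function.comp_def] using (continuous_apply j).comp_continuousOn hg

lemma aux_key_integral {Vf Vd h : ℝ → ℝ} {T : ℝ} (hT : 0 ≤ T)
    (hderiv : ∀ t ∈ Set.Ici (0:ℝ), HasDerivAt Vf (Vd t) t)
    (hVdc : ContinuousOn Vd (Set.Ici 0)) (hhc : ContinuousOn h (Set.Ici 0))
    (hle : ∀ t ∈ Set.Ici (0:ℝ), Vd t ≤ h t)
    (hVf0 : Vf 0 = 0) (hVfT : 0 ≤ Vf T) :
    0 ≤ ∫ t in (0:ℝ)..T, h t := by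
  have hsub : Set.uIcc (0:ℝ) T ⊆ Set.Ici 0 := by
    rw [Set.uIcc_of_le hT]; exact Set.Icc_subset_Ici_self
  have hVdInt : IntervalIntegrable Vd volume 0 T := (hVdc.mono hsub).intervalIntegrable
  have hhInt : IntervalIntegrable h volume 0 T := (hhc.mono hsub).intervalIntegrable
  have hFTC : ∫ t in (0:ℝ)..T, Vd t = Vf T - Vf 0 :=
    intervalIntegral.integral_eq_sub_of_hasDerivAt (fun t ht => hderiv t (hsub ht)) hVdInt
  have hmono : ∫ t in (0:ℝ)..T, Vd t ≤ ∫ t in (0:ℝ)..T, h t :=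
    intervalIntegral.integral_mono_on hT hVdInt hhInt (fun t ht => hle t ht.1)
  rw [hFTC, hVf0, sub_zero] at hmono
  linarith


/-- Theorem 3.8, thm:nltv_stable: if the SDP quadratic form of
equation (3.25) (dissipation form, including the IQC filter state `ψ` and the
filtered output `z`) is strictly negative on nonzero `(x_G, ψ, q, v, e)`, then
every trajectory of the nonlinear system `x_G' = A x_G + B (π(x_G) + e) + v`,
`ψ' = A_ψ ψ + B_ψ^v v + B_ψ^y x_G` with `v(t) = g(t, x_G(t))` starting at `0`
and satisfying the hard IQC `∫₀ᵀ zᵀ M_g z ≥ 0` obeys the finite `L₂`-gain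
bound `∫₀ᵀ |x_G|² ≤ γ² ∫₀ᵀ |e|²` for all `T ≥ 0`.
Here `c i j = (ξlo i j + ξhi i j)/2`, `cbar i j = ξhi i j - c i j`, and
`w i = ∑ j, q i j`. -/
theorem nonlinear_stability_certificate
    (n m p r : ℕ) (hn : 0 < n) (hm : 0 < m) (hp : 0 < p) (hr : 0 < r)
    (A : Matrix (Fin n) (Fin n) ℝ) (B : Matrix (Fin n) (Fin m) ℝ)
    (Aψ : Matrix (Fin p) (Fin p) ℝ) (Bψv : Matrix (Fin p) (Fin n) ℝ)
    (Bψy : Matrix (Fin p) (Fin n) ℝ) (Cψ : Matrix (Fin r) (Fin p) ℝ)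
    (Dψv : Matrix (Fin r) (Fin n) ℝ) (Dψy : Matrix (Fin r) (Fin n) ℝ)
    (Mg : Matrix (Fin r) (Fin r) ℝ) (hMg : Mg.IsSymm)
    (ξlo ξhi : Fin m → Fin n → ℝ) (hξ : ∀ i j, ξlo i j ≤ ξhi i j)
    (pol : (Fin n → ℝ) → (Fin m → ℝ))
    (hdiff : Differentiable ℝ pol) (hpol0 : pol 0 = 0)
    (hgrad : ∀ x : Fin n → ℝ, ∀ i j,
      ξlo i j ≤ fderiv ℝ pol x (Pi.single j 1) i ∧
      fderiv ℝ pol x (Pi.single j 1) i ≤ ξhi i j)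
    (P : Matrix (Fin (n + p)) (Fin (n + p)) ℝ)
    (hPsymm : P.IsSymm) (hPpsd : P.PosSemidef)
    (lam : Fin m → Fin n → ℝ) (hlam : ∀ i j, 0 ≤ lam i j)
    (γ : ℝ) (hγ : 0 < γ)
    (hSDP : ∀ (xG : Fin n → ℝ) (ψ : Fin p → ℝ) (q : Fin m → Fin n → ℝ)
        (v : Fin n → ℝ) (e : Fin m → ℝ),
      (xG, ψ, q, v, e) ≠ 0 →
      2 * (Fin.append xG ψ ⬝ᵥ P.mulVec (Fin.append
            (A.mulVec xG + B.mulVec (fun i => ∑ j, q i j) + B.mulVec e + v)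
            (Bψy.mulVec xG + Aψ.mulVec ψ + Bψv.mulVec v)))
        + ((Dψy.mulVec xG + Cψ.mulVec ψ + Dψv.mulVec v) ⬝ᵥ
            Mg.mulVec (Dψy.mulVec xG + Cψ.mulVec ψ + Dψv.mulVec v))
        + (∑ i, ∑ j, lam i j *
            (((ξhi i j - (ξlo i j + ξhi i j) / 2) ^ 2 -
                ((ξlo i j + ξhi i j) / 2) ^ 2) * (xG j) ^ 2
              + 2 * ((ξlo i j + ξhi i j) / 2) * q i j * xG j - (q i j) ^ 2))
        + γ⁻¹ * (∑ j, (xG j) ^ 2) - γ * (∑ i, (e i) ^ 2) < 0) :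
    ∀ e : ℝ → (Fin m → ℝ), ContinuousOn e (Set.Ici (0 : ℝ)) →
    ∀ g : ℝ → (Fin n → ℝ) → (Fin n → ℝ),
      Continuous (fun pr : ℝ × (Fin n → ℝ) => g pr.1 pr.2) →
    ∀ xG : ℝ → (Fin n → ℝ), ∀ ψ : ℝ → (Fin p → ℝ),
    xG 0 = 0 → ψ 0 = 0 →
    (∀ t ∈ Set.Ici (0 : ℝ),
      HasDerivAt xG
        (A.mulVec (xG t) + B.mulVec (pol (xG t) + e t) + g t (xG t)) t) →
    (∀ t ∈ Set.Ici (0 : ℝ),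
      HasDerivAt ψ
        (Aψ.mulVec (ψ t) + Bψv.mulVec (g t (xG t)) + Bψy.mulVec (xG t)) t) →
    (∀ T ≥ (0 : ℝ),
      0 ≤ ∫ t in (0 : ℝ)..T,
        ((Cψ.mulVec (ψ t) + Dψv.mulVec (g t (xG t)) + Dψy.mulVec (xG t)) ⬝ᵥ
          Mg.mulVec
            (Cψ.mulVec (ψ t) + Dψv.mulVec (g t (xG t)) + Dψy.mulVec (xG t)))) →
    ∀ T ≥ (0 : ℝ),
      (∫ t in (0 : ℝ)..T, ∑ j, (xG t j) ^ 2)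
        ≤ γ ^ 2 * ∫ t in (0 : ℝ)..T, ∑ i, (e t i) ^ 2 := by
  intro e he g hg xG ψ hx0 hψ0 hxd hψd hIQC T hT
  classical
  -- abbreviations
  set xd : ℝ → Fin n → ℝ := fun t =>
    A.mulVec (xG t) + B.mulVec (pol (xG t)) + B.mulVec (e t) + g t (xG t) with hxdDef
  set ψd : ℝ → Fin p → ℝ := fun t =>
    Bψy.mulVec (xG t) + Aψ.mulVec (ψ t) + Bψv.mulVec (g t (xG t)) with hψdDef
  set u : ℝ → Fin (n + p) → ℝ := fun t => Fin.append (xG t) (ψ t) with huDef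
  set z : ℝ → Fin r → ℝ := fun t =>
    Cψ.mulVec (ψ t) + Dψv.mulVec (g t (xG t)) + Dψy.mulVec (xG t) with hzDef
  set hfun : ℝ → ℝ := fun t =>
    γ * (∑ i, (e t i) ^ 2) - γ⁻¹ * (∑ j, (xG t j) ^ 2) - z t ⬝ᵥ Mg.mulVec (z t) with hfunDef
  -- continuity
  have hxc : ContinuousOn xG (Set.Ici 0) := fun t ht =>
    ((hxd t ht).differentiableAt.continuousAt).continuousWithinAt
  have hψc : ContinuousOn ψ (Set.Ici 0) := fun t ht =>
    ((hψd t ht).differentiableAt.continuousAt).continuousWithinAt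
  have hvc : ContinuousOn (fun t => g t (xG t)) (Set.Ici 0) := by
    have h1 : ContinuousOn (fun t => (t, xG t)) (Set.Ici (0:ℝ)) :=
      (continuousOn_id).prodMk hxc
    exact hg.comp_continuousOn h1
  have hpolc : ContinuousOn (fun t => pol (xG t)) (Set.Ici 0) :=
    hdiff.continuous.comp_continuousOn hxc
  have hzc : ContinuousOn z (Set.Ici 0) := by
    rw [hzDef]
    exact (((aux_cont_mulVec Cψ).comp_continuousOn hψc).add
      ((aux_cont_mulVec Dψv).comp_continuousOn hvc)).add
      ((aux_cont_mulVec Dψy).comp_continuousOn hxc)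
  have hxdc : ContinuousOn xd (Set.Ici 0) := by
    rw [hxdDef]
    exact ((((aux_cont_mulVec A).comp_continuousOn hxc).add
      ((aux_cont_mulVec B).comp_continuousOn hpolc)).add
      ((aux_cont_mulVec B).comp_continuousOn he)).add hvc
  have hψdc : ContinuousOn ψd (Set.Ici 0) := by
    rw [hψdDef]
    exact (((aux_cont_mulVec Bψy).comp_continuousOn hxc).add
      ((aux_cont_mulVec Aψ).comp_continuousOn hψc)).add
      ((aux_cont_mulVec Bψv).comp_continuousOn hvc)
  have huc : ContinuousOn u (Set.Ici 0) := by
    rw [huDef]; exact aux_cont_append hxc hψc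
  have hEc : ContinuousOn (fun t => ∑ i, (e t i) ^ 2) (Set.Ici (0:ℝ)) :=
    continuousOn_finset_sum _ fun i _ =>
      ((continuous_apply i).comp_continuousOn he).pow 2
  have hXc : ContinuousOn (fun t => ∑ j, (xG t j) ^ 2) (Set.Ici (0:ℝ)) :=
    continuousOn_finset_sum _ fun j _ =>
      ((continuous_apply j).comp_continuousOn hxc).pow 2
  have hZc : ContinuousOn (fun t => z t ⬝ᵥ Mg.mulVec (z t)) (Set.Ici 0) :=
    aux_cont_dot hzc ((aux_cont_mulVec Mg).comp_continuousOn hzc)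
  have hhc : ContinuousOn hfun (Set.Ici 0) := by
    rw [hfunDef]
    exact ((continuousOn_const.mul hEc).sub (continuousOn_const.mul hXc)).sub hZc
  have hVdc : ContinuousOn
      (fun t => 2 * (u t ⬝ᵥ P.mulVec (Fin.append (xd t) (ψd t)))) (Set.Ici 0) :=
    continuousOn_const.mul (aux_cont_dot huc
      ((aux_cont_mulVec P).comp_continuousOn (aux_cont_append hxdc hψdc)))
  -- derivative of the storage function
  have huderiv : ∀ t ∈ Set.Ici (0:ℝ), HasDerivAt u (Fin.append (xd t) (ψd t)) t := by
    intro t ht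
    have hx' : HasDerivAt xG (xd t) t := by
      have h0 := hxd t ht
      have heq : A.mulVec (xG t) + B.mulVec (pol (xG t) + e t) + g t (xG t) = xd t := by
        simp only [hxdDef]
        rw [Matrix.mulVec_add]
        abel
      rwa [heq] at h0
    have hψ' : HasDerivAt ψ (ψd t) t := by
      have h0 := hψd t ht
      have heq : Aψ.mulVec (ψ t) + Bψv.mulVec (g t (xG t)) + Bψy.mulVec (xG t) = ψd t := by
        simp only [hψdDef]
        abel
      rwa [heq] at h0
    rw [huDef]
    refine hasDerivAt_pi.2 fun k => ?_
    refine Fin.addCases (fun j => ?_) (fun j => ?_) k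
    · simpa only [Fin.append_left] using hasDerivAt_pi.1 hx' j
    · simpa only [Fin.append_right] using hasDerivAt_pi.1 hψ' j
  have hVderiv : ∀ t ∈ Set.Ici (0:ℝ),
      HasDerivAt (fun s => u s ⬝ᵥ P.mulVec (u s))
        (2 * (u t ⬝ᵥ P.mulVec (Fin.append (xd t) (ψd t)))) t :=
    fun t ht => aux_quad_deriv P hPsymm (huderiv t ht)
  -- pointwise dissipation inequality
  have hle : ∀ t ∈ Set.Ici (0:ℝ),
      2 * (u t ⬝ᵥ P.mulVec (Fin.append (xd t) (ψd t))) ≤ hfun t := by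
    intro t ht
    obtain ⟨q, hq1, hq2⟩ := aux_exists_q ξlo ξhi pol hdiff hpol0 hgrad (xG t)
    by_cases hzero : (xG t, ψ t, q, g t (xG t), e t) =
        (0 : (Fin n → ℝ) × (Fin p → ℝ) × (Fin m → Fin n → ℝ) × (Fin n → ℝ) × (Fin m → ℝ))
    · obtain ⟨h1, h2, h3, h4, h5⟩ : xG t = 0 ∧ ψ t = 0 ∧ q = 0 ∧ g t (xG t) = 0 ∧ e t = 0 := by
        simpa [Prod.ext_iff] using hzero
      simp only [huDef, hfunDef, hzDef, hxdDef, hψdDef]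
      rw [h4, h1, h2, h5]
      simp [aux_append_zero, Matrix.mulVec_zero]
    · have hS := hSDP (xG t) (ψ t) q (g t (xG t)) (e t) hzero
      have hw : (fun i => ∑ j, q i j) = pol (xG t) := funext hq1
      rw [hw] at hS
      have hzeq : Dψy.mulVec (xG t) + Cψ.mulVec (ψ t) + Dψv.mulVec (g t (xG t)) = z t := by
        simp only [hzDef]; abel
      rw [hzeq] at hS
      have hlamterm : 0 ≤ ∑ i, ∑ j, lam i j *
          (((ξhi i j - (ξlo i j + ξhi i j) / 2) ^ 2 -
              ((ξlo i j + ξhi i j) / 2) ^ 2) * (xG t j) ^ 2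
            + 2 * ((ξlo i j + ξhi i j) / 2) * q i j * xG t j - (q i j) ^ 2) := by
        refine Finset.sum_nonneg fun i _ => Finset.sum_nonneg fun j _ => ?_
        obtain ⟨θ, hθ1, hθ2, hθ3⟩ := hq2 i j
        rw [hθ3]
        have := aux_sector (ξlo i j) (ξhi i j) θ (xG t j) hθ1 hθ2
        have h2' : ((ξhi i j - (ξlo i j + ξhi i j) / 2) ^ 2 -
              ((ξlo i j + ξhi i j) / 2) ^ 2) * (xG t j) ^ 2
            + 2 * ((ξlo i j + ξhi i j) / 2) * (θ * xG t j) * xG t j - (θ * xG t j) ^ 2 ≥ 0 :=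
          this
        exact mul_nonneg (hlam i j) (by linarith)
      simp only [hfunDef, huDef, hxdDef, hψdDef]
      linarith
  -- integral bookkeeping
  have hsub : Set.uIcc (0:ℝ) T ⊆ Set.Ici 0 := by
    rw [Set.uIcc_of_le hT]; exact Set.Icc_subset_Ici_self
  have hEint : IntervalIntegrable (fun t => ∑ i, (e t i) ^ 2) volume 0 T :=
    (hEc.mono hsub).intervalIntegrable
  have hXint : IntervalIntegrable (fun t => ∑ j, (xG t j) ^ 2) volume 0 T :=
    (hXc.mono hsub).intervalIntegrable
  have hZint : IntervalIntegrable (fun t => z t ⬝ᵥ Mg.mulVec (z t)) volume 0 T :=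
    (hZc.mono hsub).intervalIntegrable
  have hVf0 : (fun s => u s ⬝ᵥ P.mulVec (u s)) 0 = 0 := by
    simp [huDef, hx0, hψ0, aux_append_zero]
  have hVfT : 0 ≤ (fun s => u s ⬝ᵥ P.mulVec (u s)) T := by
    simpa using hPpsd.dotProduct_mulVec_nonneg (u T)
  have hkey : 0 ≤ ∫ t in (0:ℝ)..T, hfun t :=
    aux_key_integral hT hVderiv hVdc hhc hle hVf0 hVfT
  have hsplit : ∫ t in (0:ℝ)..T, hfun t
      = γ * (∫ t in (0:ℝ)..T, ∑ i, (e t i) ^ 2)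
        - γ⁻¹ * (∫ t in (0:ℝ)..T, ∑ j, (xG t j) ^ 2)
        - ∫ t in (0:ℝ)..T, (z t ⬝ᵥ Mg.mulVec (z t)) := by
    simp only [hfunDef]
    rw [intervalIntegral.integral_sub
        ((hEint.const_mul γ).sub (hXint.const_mul γ⁻¹)) hZint,
      intervalIntegral.integral_sub (hEint.const_mul γ) (hXint.const_mul γ⁻¹),
      intervalIntegral.integral_const_mul, intervalIntegral.integral_const_mul]
  have hZnn : 0 ≤ ∫ t in (0:ℝ)..T, (z t ⬝ᵥ Mg.mulVec (z t)) := by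
    have := hIQC T hT
    simpa only [hzDef] using this
  rw [hsplit] at hkey
  have h2 : γ⁻¹ * (∫ t in (0:ℝ)..T, ∑ j, (xG t j) ^ 2)
      ≤ γ * ∫ t in (0:ℝ)..T, ∑ i, (e t i) ^ 2 := by linarith
  have h3 := mul_le_mul_of_nonneg_left h2 hγ.le
  rw [← mul_assoc, mul_inv_cancel₀ hγ.ne', one_mul, ← mul_assoc] at h3
  calc (∫ t in (0:ℝ)..T, ∑ j, (xG t j) ^ 2)
      ≤ γ * γ * ∫ t in (0:ℝ)..T, ∑ i, (e t i) ^ 2 := h3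
    _ = γ ^ 2 * ∫ t in (0:ℝ)..T, ∑ i, (e t i) ^ 2 := by ring
end

section
/- Let H₀ be a real Hilbert space, let n, m be positive integers, and let H₁ be the Hilbert space of functions {1,…,n} → H₀ and H₂ the Hilbert space of functions {1,…,m}×{1,…,n} → H₀, each with the product inner product. Let G : H₂ → H₁ be a continuous linear map. Suppose q ∈ H₂ is nonzero, x = G q, and for all i ∈ {1,…,m}, j ∈ {1,…,n}: (c̄_{ij}² − c_{ij}²)‖x_j‖² + 2 c_{ij} ⟨q_{ij}, x_j⟩ − ‖q_{ij}‖² ≥ 0. Then x ≠ 0, and there exists a continuous linear map π̃ : H₁ → H₂ with π̃(x) = q and ‖π̃(y)‖ ≤ (‖q‖/‖x‖)‖y‖ for all y ∈ H₁, such that the map id_{H₁} − G ∘ π̃ is not injective. -/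
/-- Lemma 3.7, contrapositive form: if a nonzero `q` with
`x = G q` satisfies all the quadratic constraints `φ_{ij}(x,q) ≥ 0`
(with `c i j = (ξlo i j + ξhi i j)/2` and `cbar i j = ξhi i j - c i j`), then
`x ≠ 0` and the explicit construction `π̃(y) = (⟨y,x⟩/‖x‖²) • q` yields a
continuous linear map with `π̃ x = q`, operator-norm bound `‖q‖/‖x‖`, and
`id - G ∘ π̃` not injective. -/
theorem robust_stability_excludes_constraint_signals
    (H₀ : Type*) [NormedAddCommGroup H₀] [InnerProductSpace ℝ H₀]
    [CompleteSpace H₀]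
    (n m : ℕ) (hn : 0 < n) (hm : 0 < m)
    (ξlo ξhi : Fin m → Fin n → ℝ) (hξ : ∀ i j, ξlo i j ≤ ξhi i j)
    (G : (PiLp 2 fun _ : Fin m × Fin n => H₀) →L[ℝ]
          (PiLp 2 fun _ : Fin n => H₀))
    (q : PiLp 2 fun _ : Fin m × Fin n => H₀) (hq : q ≠ 0)
    (x : PiLp 2 fun _ : Fin n => H₀) (hx : x = G q)
    (hφ : ∀ (i : Fin m) (j : Fin n),
      0 ≤ ((ξhi i j - (ξlo i j + ξhi i j) / 2) ^ 2 -
            ((ξlo i j + ξhi i j) / 2) ^ 2) * ‖x j‖ ^ 2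
          + 2 * ((ξlo i j + ξhi i j) / 2) * (inner ℝ (q (i, j)) (x j) : ℝ)
          - ‖q (i, j)‖ ^ 2) :
    x ≠ 0 ∧
    ∃ polt : (PiLp 2 fun _ : Fin n => H₀) →L[ℝ]
        (PiLp 2 fun _ : Fin m × Fin n => H₀),
      polt x = q ∧
      (∀ y, ‖polt y‖ ≤ (‖q‖ / ‖x‖) * ‖y‖) ∧
      ¬ Function.Injective
        (fun y : PiLp 2 fun _ : Fin n => H₀ => y - G (polt y)) := by
  have hxne : x ≠ 0 := by
    intro hx0
    apply hq
    ext ij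
    have h := hφ ij.1 ij.2
    have hxj : x ij.2 = 0 := by rw [hx0]; rfl
    rw [hxj] at h
    simp only [norm_zero, inner_zero_right] at h
    have : ‖q (ij.1, ij.2)‖ ^ 2 ≤ 0 := by nlinarith
    have : ‖q (ij.1, ij.2)‖ = 0 := by nlinarith [norm_nonneg (q (ij.1, ij.2)), sq_nonneg ‖q (ij.1, ij.2)‖]
    have := norm_eq_zero.mp this
    simpa using this
  have hxn : (0:ℝ) < ‖x‖ := norm_pos_iff.mpr hxne
  refine ⟨hxne, (‖x‖^2)⁻¹ • ((innerSL ℝ x).smulRight q), ?_, ?_, ?_⟩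
  · show (‖x‖^2)⁻¹ • ((inner ℝ x x : ℝ) • q) = q
    rw [real_inner_self_eq_norm_sq, smul_smul, inv_mul_cancel₀ (by positivity), one_smul]
  · intro y
    show ‖(‖x‖^2)⁻¹ • ((inner ℝ x y : ℝ) • q)‖ ≤ (‖q‖ / ‖x‖) * ‖y‖
    rw [norm_smul, norm_smul]
    have hcs := abs_real_inner_le_norm x y
    simp only [norm_inv, norm_pow, norm_norm, Real.norm_eq_abs, abs_norm]
    rw [div_mul_eq_mul_div, le_div_iff₀ hxn]
    have h2 : (‖x‖ ^ 2)⁻¹ * (|(inner ℝ x y : ℝ)| * ‖q‖) * ‖x‖ ≤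
        (‖x‖ ^ 2)⁻¹ * ((‖x‖ * ‖y‖) * ‖q‖) * ‖x‖ := by
      apply mul_le_mul_of_nonneg_right _ (norm_nonneg x)
      apply mul_le_mul_of_nonneg_left _ (by positivity)
      exact mul_le_mul_of_nonneg_right hcs (norm_nonneg q)
    calc (‖x‖ ^ 2)⁻¹ * (|(inner ℝ x y : ℝ)| * ‖q‖) * ‖x‖
        ≤ (‖x‖ ^ 2)⁻¹ * ((‖x‖ * ‖y‖) * ‖q‖) * ‖x‖ := h2
      _ = ‖q‖ * ‖y‖ := by field_simp
  · intro hinj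
    apply hxne
    apply hinj
    show x - G (((‖x‖^2)⁻¹ • ((innerSL ℝ) x).smulRight q) x)
        = 0 - G (((‖x‖^2)⁻¹ • ((innerSL ℝ) x).smulRight q) 0)
    have happ : ((‖x‖^2)⁻¹ • ((innerSL ℝ) x).smulRight q) x = q := by
      simp only [ContinuousLinearMap.smul_apply, ContinuousLinearMap.smulRight_apply,
        innerSL_apply_apply]
      rw [real_inner_self_eq_norm_sq, smul_smul, inv_mul_cancel₀ (by positivity), one_smul]
    rw [happ, hx]
    simp
end

section
/- Let H be a real Hilbert space, ι a finite index set, and for each i ∈ ι let T_i : H → H be a continuous linear operator. Let (U_k)_{k∈ℕ} be a sequence of linear isometries of H such that (a) ⟨T_i(U_k f), U_k g⟩ = ⟨T_i f, g⟩ for all f, g ∈ H, i ∈ ι, and k ∈ ℕ, and (b) ⟨f, U_k g⟩ → 0 as k → ∞ for all f, g ∈ H. Then the closure of the set Ψ = { (⟨q, T_i q⟩)_{i∈ι} : q ∈ H, ‖q‖ = 1 } ⊆ ℝ^ι is convex. -/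
open Filter Topology

/-- abstraction of Lemma 3.8: given continuous linear operators
`T i` on a real Hilbert space `H` and a sequence of linear isometries `U k`
commuting with each `T i` in the quadratic-form sense and vanishing weakly,
the closure of the set of quadratic-form values
`{ (⟨q, T i q⟩)_i : ‖q‖ = 1 }` is convex. -/
theorem closure_of_quadratic_form_values_convex
    (H : Type*) [NormedAddCommGroup H] [InnerProductSpace ℝ H]
    [CompleteSpace H]
    (ι : Type*) [Fintype ι]
    (T : ι → H →L[ℝ] H)
    (U : ℕ → H →ₗᵢ[ℝ] H)
    (ha : ∀ (i : ι) (k : ℕ) (f g : H),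
      (inner ℝ (T i (U k f)) (U k g) : ℝ) = inner ℝ (T i f) g)
    (hb : ∀ f g : H,
      Filter.Tendsto (fun k => (inner ℝ f (U k g) : ℝ)) Filter.atTop (nhds 0)) :
    Convex ℝ (closure
      {rv : ι → ℝ | ∃ q : H, ‖q‖ = 1 ∧ rv = fun i => (inner ℝ q (T i q) : ℝ)}) := by
  set S := {rv : ι → ℝ | ∃ q : H, ‖q‖ = 1 ∧ rv = fun i => (inner ℝ q (T i q) : ℝ)} with hSdef
  have key : ∀ v ∈ S, ∀ w ∈ S, ∀ a b : ℝ, 0 ≤ a → 0 ≤ b → a + b = 1 →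
      a • v + b • w ∈ closure S := by
    rintro v ⟨q1, hq1, rfl⟩ w ⟨q2, hq2, rfl⟩ a b ha0 hb0 hab
    set s := Real.sqrt a with hsdef
    set r := Real.sqrt b with hrdef
    have hs2 : s ^ 2 = a := Real.sq_sqrt ha0
    have hr2 : r ^ 2 = b := Real.sq_sqrt hb0
    set q : ℕ → H := fun k => s • q1 + r • (U k q2) with hqdef
    have hUnorm : ∀ k : ℕ, ‖(U k q2 : H)‖ = 1 := fun k => by
      rw [(U k).norm_map, hq2]
    -- norm squared tends to 1
    have hnormsq : Tendsto (fun k => ‖q k‖ ^ 2) atTop (𝓝 1) := by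
      have hexp : ∀ k, ‖q k‖ ^ 2 = a + b + (2 * s * r) * (inner ℝ q1 (U k q2) : ℝ) := by
        intro k
        rw [hqdef]
        rw [norm_add_sq_real, real_inner_smul_left, real_inner_smul_right,
          norm_smul, norm_smul, mul_pow, mul_pow, hq1, hUnorm k]
        simp only [Real.norm_eq_abs, sq_abs]
        rw [hs2, hr2]
        ring
      rw [show (1 : ℝ) = a + b + (2 * s * r) * 0 by rw [hab]; ring]
      simp only [hexp]
      exact tendsto_const_nhds.add (tendsto_const_nhds.mul (hb q1 q2))
    have hN : Tendsto (fun k => ‖q k‖) atTop (𝓝 1) := by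
      have : Tendsto (fun k => Real.sqrt (‖q k‖ ^ 2)) atTop (𝓝 (Real.sqrt 1)) :=
        (Real.continuous_sqrt.tendsto 1).comp hnormsq
      simpa [Real.sqrt_one, Real.sqrt_sq (norm_nonneg _)] using this
    have hNinv : Tendsto (fun k => ‖q k‖⁻¹) atTop (𝓝 1) := by
      simpa using hN.inv₀ one_ne_zero
    have hpos : ∀ᶠ k in atTop, 0 < ‖q k‖ :=
      hN.eventually (eventually_gt_nhds (by norm_num))
    -- quadratic form values tend componentwise
    have hA : ∀ i : ι, Tendsto (fun k => (inner ℝ (q k) (T i (q k)) : ℝ)) atTop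
        (𝓝 (a * (inner ℝ q1 (T i q1) : ℝ) + b * (inner ℝ q2 (T i q2) : ℝ))) := by
      intro i
      have hexp : ∀ k, (inner ℝ (q k) (T i (q k)) : ℝ)
          = a * (inner ℝ q1 (T i q1) : ℝ) + b * (inner ℝ q2 (T i q2) : ℝ)
            + (s * r) * ((inner ℝ ((ContinuousLinearMap.adjoint (T i)) q1) (U k q2) : ℝ)
              + (inner ℝ (T i q1) (U k q2) : ℝ)) := by
        intro k
        have h3 : (inner ℝ ((U k q2 : H)) (T i (U k q2)) : ℝ) = inner ℝ q2 (T i q2) := by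
          rw [real_inner_comm, ha i k q2 q2, real_inner_comm]
        have h1 : (inner ℝ q1 (T i (U k q2)) : ℝ)
            = inner ℝ ((ContinuousLinearMap.adjoint (T i)) q1) (U k q2) :=
          (ContinuousLinearMap.adjoint_inner_left (T i) (U k q2) q1).symm
        have h2 : (inner ℝ ((U k q2 : H)) (T i q1) : ℝ) = inner ℝ (T i q1) (U k q2) :=
          real_inner_comm _ _
        rw [hqdef]
        simp only [map_add, map_smul, inner_add_left, inner_add_right,
          real_inner_smul_left, real_inner_smul_right]
        rw [h1, h2, h3]
        rw [← hs2, ← hr2]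
        ring
      rw [show a * (inner ℝ q1 (T i q1) : ℝ) + b * (inner ℝ q2 (T i q2) : ℝ)
          = a * (inner ℝ q1 (T i q1) : ℝ) + b * (inner ℝ q2 (T i q2) : ℝ)
            + (s * r) * (0 + 0) by ring]
      simp only [hexp]
      exact tendsto_const_nhds.add (tendsto_const_nhds.mul
        ((hb _ q2).add (hb _ q2)))
    -- the normalized sequence of values
    have htend : Tendsto (fun k => fun i => (‖q k‖⁻¹) ^ 2 * (inner ℝ (q k) (T i (q k)) : ℝ))
        atTop (𝓝 (a • (fun i => (inner ℝ q1 (T i q1) : ℝ))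
          + b • (fun i => (inner ℝ q2 (T i q2) : ℝ)))) := by
      rw [tendsto_pi_nhds]
      intro i
      have : Tendsto (fun k => (‖q k‖⁻¹) ^ 2 * (inner ℝ (q k) (T i (q k)) : ℝ)) atTop
          (𝓝 (1 ^ 2 * (a * (inner ℝ q1 (T i q1) : ℝ) + b * (inner ℝ q2 (T i q2) : ℝ)))) :=
        ((hNinv.pow 2).mul (hA i))
      simpa using this
    refine mem_closure_of_tendsto htend ?_
    filter_upwards [hpos] with k hk
    refine ⟨‖q k‖⁻¹ • q k, ?_, ?_⟩
    · rw [norm_smul, Real.norm_eq_abs, abs_of_pos (inv_pos.mpr hk),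
        inv_mul_cancel₀ hk.ne']
    · funext i
      rw [map_smul, real_inner_smul_left, real_inner_smul_right]
      ring
  -- upgrade to convexity of the closure
  intro x hx y hy a b ha0 hb0 hab
  have := map_mem_closure₂ (f := fun p q : ι → ℝ => a • p + b • q)
    (by fun_prop) hx hy (fun p hp q hq => key p hp q hq a b ha0 hb0 hab)
  rwa [closure_closure] at this
end
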